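/- Let B be a reduced abelian p-group, S a finite subgroup of B, and d ∈ B \ S such that pd ∈ S, d is proper with respect to S, d has ordinal height h(d), and h(pd) > h(d) + 1. Then there exists v ∈ B_{h(d)+1} with pv = pd, and for any such v the element d − v lies in P_{h(d)}(B), has height exactly h(d), and is proper with respect to S. -/

import Mathlib

open Ordinal

/-- Scalar multiplication by `p` as an additive group homomorphism. -/
def pHom (p : ℕ) (G : Type*) [AddCommGroup G] : G →+ G :=
  AddMonoidHom.mk' (fun x => p • x) (fun a b => smul_add p a b)

@[simp] lemma pHom_apply (p : ℕ) {G : Type*} [AddCommGroup G] (x : G) :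
    pHom p G x = p • x := rfl

/-- The Ulm subgroups `G_β`: `G_0 = G`, `G_{β+1} = pG_β`, and intersections at limits. -/
noncomputable def ulmSub (p : ℕ) (G : Type*) [AddCommGroup G] (β : Ordinal.{0}) :
    AddSubgroup G :=
  Ordinal.limitRecOn β ⊤ (fun _ H => AddSubgroup.map (pHom p G) H)
    (fun o _ ih => ⨅ (γ : Ordinal.{0}) (h : γ < o), ih γ h)

lemma ulmSub_succ (p : ℕ) (G : Type*) [AddCommGroup G] (β : Ordinal.{0}) :
    ulmSub p G (β + 1) = AddSubgroup.map (pHom p G) (ulmSub p G β) := by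
  unfold ulmSub
  rw [Ordinal.add_one_eq_succ, Ordinal.limitRecOn_succ]

lemma ulmSub_succ_le (p : ℕ) (G : Type*) [AddCommGroup G] (β : Ordinal.{0}) :
    ulmSub p G (β + 1) ≤ ulmSub p G β := by
  rw [ulmSub_succ]
  rintro x ⟨y, hy, rfl⟩
  simpa using (ulmSub p G β).nsmul_mem hy p

/-- An abelian `p`-group: every element is killed by some power of `p`. -/
def IsAbelianPGroup (p : ℕ) (G : Type*) [AddCommGroup G] : Prop :=
  ∀ x : G, ∃ n : ℕ, p ^ n • x = 0

/-- The length `λ(G)`: the least ordinal `β` with `G_β = G_{β+1}`. -/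
noncomputable def ulmLength (p : ℕ) (G : Type*) [AddCommGroup G] : Ordinal.{0} :=
  sInf {β : Ordinal.{0} | ulmSub p G β = ulmSub p G (β + 1)}

/-- `G` is reduced if `G_{λ(G)} = {0}`. -/
def IsReducedPGroup (p : ℕ) (G : Type*) [AddCommGroup G] : Prop :=
  ulmSub p G (ulmLength p G) = ⊥

/-- `P_β(G) = {x ∈ G_β : px = 0}`. -/
noncomputable def ulmP (p : ℕ) (G : Type*) [AddCommGroup G] (β : Ordinal.{0}) : AddSubgroup G :=
  (pHom p G).ker ⊓ ulmSub p G β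

/-- The quotient `P_β(G)/P_{β+1}(G)` (as a quotient of `P_β(G)` by the subgroup
corresponding to `P_{β+1}(G)`). -/
noncomputable def ulmQuot (p : ℕ) (G : Type*) [AddCommGroup G] (β : Ordinal.{0}) :=
  (ulmP p G β) ⧸ ((ulmP p G (β + 1)).addSubgroupOf (ulmP p G β))

noncomputable instance (p : ℕ) (G : Type*) [AddCommGroup G] (β : Ordinal.{0}) :
    AddCommGroup (ulmQuot p G β) :=
  inferInstanceAs (AddCommGroup ((ulmP p G β) ⧸ ((ulmP p G (β + 1)).addSubgroupOf (ulmP p G β))))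

noncomputable instance (p : ℕ) (G : Type*) [AddCommGroup G] (β : Ordinal.{0}) :
    Module (ZMod p) (ulmQuot p G β) :=
  QuotientAddGroup.zmodModule (by
    intro x
    simp only [AddSubgroup.mem_addSubgroupOf]
    have hx : ((p • x : ulmP p G β) : G) = 0 := by
      have this : (x : G) ∈ (pHom p G).ker := (AddSubgroup.mem_inf.mp x.2).1
      rw [AddMonoidHom.mem_ker, pHom_apply] at this
      simpa using this
    rw [hx]
    exact (ulmP p G (β + 1)).zero_mem)

/-- The Ulm invariant `u_β(G)`: the dimension of `P_β(G)/P_{β+1}(G)` over `ℤ/pℤ`. -/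
noncomputable def ulmInvariant (p : ℕ) (G : Type*) [AddCommGroup G] (β : Ordinal.{0}) :
    Cardinal :=
  Module.rank (ZMod p) (ulmQuot p G β)

open Classical in
/-- The height of `x`: the unique ordinal `β` with `x ∈ G_β \ G_{β+1}` if it exists, and `∞`
(= `⊤`) otherwise. -/
noncomputable def height (p : ℕ) {G : Type*} [AddCommGroup G] (x : G) : WithTop Ordinal.{0} :=
  if ∃ β : Ordinal.{0}, x ∈ ulmSub p G β ∧ x ∉ ulmSub p G (β + 1) then
    ((sInf {β : Ordinal.{0} | x ∈ ulmSub p G β ∧ x ∉ ulmSub p G (β + 1)} : Ordinal.{0}) :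
      WithTop Ordinal.{0})
  else ⊤

/-- `d` is proper with respect to `S` if `h(d) ≥ h(d+s)` for every `s ∈ S`. -/
def ProperWRT (p : ℕ) {G : Type*} [AddCommGroup G] (S : AddSubgroup G) (d : G) : Prop :=
  ∀ s ∈ S, height p (d + s) ≤ height p d


lemma ulmSub_zero' (p : ℕ) (G : Type*) [AddCommGroup G] : ulmSub p G 0 = ⊤ := by
  unfold ulmSub; rw [Ordinal.limitRecOn_zero]

lemma ulmSub_limit' (p : ℕ) (G : Type*) [AddCommGroup G] {β : Ordinal.{0}}
    (hβ : Order.IsSuccLimit β) :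
    ulmSub p G β = ⨅ (γ : Ordinal.{0}) (_ : γ < β), ulmSub p G γ := by
  unfold ulmSub; rw [Ordinal.limitRecOn_limit _ _ _ _ hβ]

lemma ulmSub_antitone (p : ℕ) (G : Type*) [AddCommGroup G] :
    ∀ β γ : Ordinal.{0}, γ ≤ β → ulmSub p G β ≤ ulmSub p G γ := by
  intro β
  induction β using Ordinal.induction with
  | h β ih =>
    intro γ hγ
    rcases eq_or_lt_of_le hγ with rfl | hlt
    · exact le_refl _
    · rcases Ordinal.zero_or_succ_or_isSuccLimit β with h0 | ⟨a, ha⟩ | hlim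
      · exact absurd (h0 ▸ hlt) (not_lt_zero (a := γ))
      · subst ha
        have h1 : ulmSub p G (Order.succ a) ≤ ulmSub p G a := by
          rw [← Ordinal.add_one_eq_succ]
          exact ulmSub_succ_le p G a
        exact h1.trans (ih a (Order.lt_succ a) γ (Order.lt_succ_iff.mp hlt))
      · rw [ulmSub_limit' p G hlim]
        exact iInf₂_le γ hlt

/-- If `x ∉ G_μ` then there is a successor stage `δ+1 ≤ μ` where `x` first drops out. -/
lemma exists_drop (p : ℕ) (G : Type*) [AddCommGroup G] {x : G} {μ : Ordinal.{0}}
    (hx : x ∉ ulmSub p G μ) :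
    ∃ δ : Ordinal.{0}, δ + 1 ≤ μ ∧ x ∈ ulmSub p G δ ∧ x ∉ ulmSub p G (δ + 1) := by
  set T : Set Ordinal.{0} := {γ | x ∉ ulmSub p G γ} with hT
  have hne : T.Nonempty := ⟨μ, hx⟩
  have hmem : sInf T ∈ T := csInf_mem hne
  have hlow : ∀ γ < sInf T, x ∈ ulmSub p G γ := by
    intro γ hγ
    by_contra h
    exact absurd (csInf_le' (s := T) h) (not_le_of_gt hγ)
  rcases Ordinal.zero_or_succ_or_isSuccLimit (sInf T) with h0 | ⟨a, ha⟩ | hlim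
  · exfalso
    apply hmem
    rw [h0, ulmSub_zero']
    exact AddSubgroup.mem_top x
  · refine ⟨a, ?_, ?_, ?_⟩
    · rw [Ordinal.add_one_eq_succ, ha]
      exact csInf_le' (s := T) hx
    · exact hlow a (ha ▸ Order.lt_succ a)
    · rw [Ordinal.add_one_eq_succ, ha]; exact hmem
  · exfalso
    apply hmem
    rw [ulmSub_limit' p G hlim]
    simp only [AddSubgroup.mem_iInf]
    exact fun γ hγ => hlow γ hγ

lemma height_eq_of (p : ℕ) {G : Type*} [AddCommGroup G] {x : G} {β : Ordinal.{0}}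
    (h1 : x ∈ ulmSub p G β) (h2 : x ∉ ulmSub p G (β + 1)) :
    height p x = (β : WithTop Ordinal.{0}) := by
  have hne : ∃ γ : Ordinal.{0}, x ∈ ulmSub p G γ ∧ x ∉ ulmSub p G (γ + 1) := ⟨β, h1, h2⟩
  rw [height, if_pos hne]
  congr 1
  have hle : sInf {γ : Ordinal.{0} | x ∈ ulmSub p G γ ∧ x ∉ ulmSub p G (γ + 1)} ≤ β :=
    csInf_le' ⟨h1, h2⟩
  have hmem := csInf_mem (s := {γ : Ordinal.{0} | x ∈ ulmSub p G γ ∧ x ∉ ulmSub p G (γ + 1)}) hne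
  refine le_antisymm hle ?_
  by_contra hlt
  push_neg at hlt
  have : ulmSub p G β ≤ ulmSub p G (sInf {γ : Ordinal.{0} | x ∈ ulmSub p G γ ∧ x ∉ ulmSub p G (γ + 1)} + 1) :=
    ulmSub_antitone p G _ _ (Order.succ_le_of_lt hlt)
  exact hmem.2 (this h1)

lemma height_le_iff (p : ℕ) {G : Type*} [AddCommGroup G] {x : G} {β : Ordinal.{0}} :
    height p x ≤ (β : WithTop Ordinal.{0}) ↔ x ∉ ulmSub p G (β + 1) := by
  constructor
  · intro h hx
    by_cases hne : ∃ γ : Ordinal.{0}, x ∈ ulmSub p G γ ∧ x ∉ ulmSub p G (γ + 1)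
    · rw [height, if_pos hne] at h
      have hmem := csInf_mem (s := {γ : Ordinal.{0} | x ∈ ulmSub p G γ ∧ x ∉ ulmSub p G (γ + 1)}) hne
      set μ := sInf {γ : Ordinal.{0} | x ∈ ulmSub p G γ ∧ x ∉ ulmSub p G (γ + 1)}
      have hμβ : μ ≤ β := WithTop.coe_le_coe.mp h
      have : ulmSub p G (β + 1) ≤ ulmSub p G (μ + 1) :=
        ulmSub_antitone p G _ _ (by exact add_le_add_left hμβ 1)
      exact hmem.2 (this hx)
    · rw [height, if_neg hne] at h
      exact absurd h (by simp)
  · intro hx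
    obtain ⟨δ, hδle, h1, h2⟩ := exists_drop p G hx
    rw [height_eq_of p h1 h2]
    have : δ ≤ β := by
      rw [Ordinal.add_one_eq_succ, Ordinal.add_one_eq_succ] at hδle
      exact Order.succ_le_succ_iff.mp hδle
    exact_mod_cast this

/-- Extension step in Ulm's theorem, case `h(pd) > h(d) + 1`: there is `v ∈ B_{h(d)+1}` with
`pv = pd`, and for any such `v` the element `d − v` lies in `P_{h(d)}(B)`, has height exactly
`h(d)`, and is proper with respect to `S`. -/
theorem extension_step_high (p : ℕ) (hp : p.Prime)
    (B : Type) [AddCommGroup B]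
    (hB : IsAbelianPGroup p B) (hBred : IsReducedPGroup p B)
    (S : AddSubgroup B) (hS : (S : Set B).Finite)
    (d : B) (hdS : d ∉ S) (hpd : p • d ∈ S)
    (hproper : ProperWRT p S d)
    (β : Ordinal.{0}) (hd1 : d ∈ ulmSub p B β) (hd2 : d ∉ ulmSub p B (β + 1))
    (hhigh : ((β + 1 : Ordinal.{0}) : WithTop Ordinal.{0}) < height p (p • d)) :
    (∃ v ∈ ulmSub p B (β + 1), p • v = p • d) ∧
    ∀ v ∈ ulmSub p B (β + 1), p • v = p • d →
      d - v ∈ ulmP p B β ∧ (d - v ∈ ulmSub p B β ∧ d - v ∉ ulmSub p B (β + 1)) ∧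
        ProperWRT p S (d - v) := by
  -- height of d is β
  have hd : height p d = (β : WithTop Ordinal.{0}) := height_eq_of p hd1 hd2
  -- pd ∈ B_{β+2}
  have hpd2 : p • d ∈ ulmSub p B ((β + 1) + 1) := by
    by_contra h
    exact absurd ((height_le_iff p).mpr h) (not_le_of_gt hhigh)
  rw [ulmSub_succ] at hpd2
  obtain ⟨v, hv, hvp⟩ := hpd2
  simp only [pHom_apply] at hvp
  refine ⟨⟨v, hv, hvp⟩, ?_⟩
  intro v hv hvp
  have hsub : d - v ∈ ulmSub p B β :=
    (ulmSub p B β).sub_mem hd1 (ulmSub_succ_le p B β hv)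
  have hnot : d - v ∉ ulmSub p B (β + 1) := by
    intro h
    have : d ∈ ulmSub p B (β + 1) := by
      have h2 := (ulmSub p B (β + 1)).add_mem h hv
      rwa [sub_add_cancel] at h2
    exact hd2 this
  have hker : d - v ∈ (pHom p B).ker := by
    rw [AddMonoidHom.mem_ker, pHom_apply, smul_sub, hvp]
    exact sub_self _
  refine ⟨⟨hker, hsub⟩, ⟨hsub, hnot⟩, ?_⟩
  · intro s hs
    rw [height_eq_of p hsub hnot]
    have hds : d + s ∉ ulmSub p B (β + 1) := by
      have := hproper s hs
      rw [hd] at this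
      exact (height_le_iff p).mp this
    apply (height_le_iff p).mpr
    intro h
    apply hds
    have : d - v + s + v ∈ ulmSub p B (β + 1) := (ulmSub p B (β + 1)).add_mem h hv
    convert this using 1
    abel
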